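/- The Krawtchouk polynomials are eigenfunctions of ∇̃_n ∘ ∇_n: for every r ∈ {0,...,n}, (∇̃_n ∘ ∇_n)φ_r = (r(n-r+1)/(n²t(1-t)))·φ_r. -/

import Mathlib

set_option maxHeartbeats 2000000
open Finset Polynomial

lemma extract (m : ℕ) (f : ℕ → ℝ) (p : ℝ[X])
    (h : ∀ w : ℝ, ∑ i ∈ range m, f i * w ^ i = p.eval w) :
    ∀ i < m, f i = p.coeff i := by
  intro i hi
  have hq : (∑ j ∈ range m, C (f j) * X ^ j : ℝ[X]) = p := by
    apply Polynomial.funext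
    intro w
    rw [← h w]
    simp [Polynomial.eval_finset_sum]
  have := congrArg (fun q : ℝ[X] => q.coeff i) hq
  simp only [Polynomial.finset_sum_coeff, Polynomial.coeff_C_mul, Polynomial.coeff_X_pow] at this
  rw [← this, Finset.sum_eq_single i]
  · simp
  · intro b _ hb; simp [Ne.symm hb]
  · intro hni; exact absurd (Finset.mem_range.mpr hi) hni

noncomputable def Pq (n : ℕ) (t : ℝ) (j : ℕ) : ℝ[X] :=
  (1 + C (1 - t) * X) ^ j * (1 - C t * X) ^ (n - j)

noncomputable def Gq (n : ℕ) (t : ℝ) (j : ℕ) : ℝ[X] :=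
  C ((j : ℝ) / n) * (Pq n t j - Pq n t (j - 1))
    + C (((n : ℝ) - (j : ℝ)) / n) * (Pq n t (j + 1) - Pq n t j)

noncomputable def Hq (n : ℕ) (t : ℝ) (k : ℕ) : ℝ[X] :=
  C ((k : ℝ) / n * ((1 - t) / t)) * Gq n t (k - 1)
    - C (((n : ℝ) - 2 * k) / n) * Gq n t k
    - C (((n : ℝ) - k) / n * (t / (1 - t))) * Gq n t (k + 1)

lemma hRcoeff (n : ℕ) (p : ℝ[X]) (r : ℕ) :
    (C (n:ℝ) * X * derivative p - X ^ 2 * derivative (derivative p)).coeff r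
      = (r : ℝ) * ((n : ℝ) - r + 1) * p.coeff r := by
  have hX2 : (X ^ 2 * derivative (derivative p) : ℝ[X])
      = X * (X * derivative (derivative p)) := by ring
  rw [Polynomial.coeff_sub, mul_assoc, Polynomial.coeff_C_mul, hX2]
  match r with
  | 0 =>
    simp [Polynomial.mul_coeff_zero]
  | 1 =>
    rw [show (1:ℕ) = 0 + 1 from rfl]
    simp only [Polynomial.coeff_X_mul, Polynomial.coeff_derivative,
      Polynomial.mul_coeff_zero, Polynomial.coeff_X_zero]
    push_cast
    ring
  | (m+2) =>
    rw [show m + 2 = (m + 1) + 1 from rfl]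
    simp only [Polynomial.coeff_X_mul, Polynomial.coeff_derivative]
    push_cast
    ring

lemma PI (n : ℕ) (hn1 : 1 ≤ n) (t : ℝ) (ht0 : t ≠ 0) (ht1 : (1:ℝ) - t ≠ 0)
    (k : ℕ) (hk : k ≤ n) :
    C ((n : ℝ) ^ 2 * t * (1 - t)) * Hq n t k
      = C (n : ℝ) * X * derivative (Pq n t k)
        - X ^ 2 * derivative (derivative (Pq n t k)) := by
  have hn : (n:ℝ) ≠ 0 := Nat.cast_ne_zero.mpr (by omega)
  apply Polynomial.funext
  intro w
  rcases Nat.lt_or_ge k 2 with hk2 | hk2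
  · rcases Nat.lt_or_ge n 3 with hn3 | hn3
    · -- small: n ∈ {1,2}, k ∈ {0,1,2}, k ≤ n
      interval_cases n <;> interval_cases k <;>
        · simp only [Hq, Gq, Pq, derivative_mul, derivative_pow, derivative_add,
            derivative_one, derivative_sub, Polynomial.derivative_C_mul, derivative_X,
            derivative_C, eval_mul, eval_add, eval_sub, eval_pow, eval_C, eval_X, eval_one]
          norm_num
          field_simp
          ring
    · -- n ≥ 3, k ∈ {0,1}
      obtain ⟨j, rfl⟩ : ∃ j, n = j + 3 := ⟨n - 3, by omega⟩
      interval_cases k <;>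
        · simp only [Hq, Gq, Pq, derivative_mul, derivative_pow, derivative_add,
            derivative_one, derivative_sub, Polynomial.derivative_C_mul, derivative_X,
            derivative_C, eval_mul, eval_add, eval_sub, eval_pow, eval_C, eval_X, eval_one, derivative_zero, eval_zero]
          simp only [show (0:ℕ)-1 = 0 from rfl, Nat.sub_zero,
            show j+3-1 = j+2 from rfl, show j+3-2 = j+1 from rfl, show j+3-3 = j from rfl,
            show j+2-1 = j+1 from rfl, show j+1-1 = j from rfl,
            show (1:ℕ)-1 = 0 from rfl, show (2:ℕ)-1 = 1 from rfl, show (3:ℕ)-1 = 2 from rfl,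
            show (0:ℕ)+1 = 1 from rfl, show (1:ℕ)+1 = 2 from rfl, show (2:ℕ)+1 = 3 from rfl,
            pow_zero, pow_one, Nat.cast_zero, Nat.cast_one, Nat.cast_ofNat, Nat.cast_add]
          push_cast
          field_simp
          ring
  · -- k ≥ 2
    obtain ⟨i, rfl⟩ : ∃ i, k = i + 2 := ⟨k - 2, by omega⟩
    rcases Nat.lt_or_ge n (i + 2 + 2) with hn4 | hn4
    · -- n = k or n = k+1
      rcases (by omega : n = i + 2 ∨ n = i + 3) with rfl | rfl <;>
        · simp only [Hq, Gq, Pq, derivative_mul, derivative_pow, derivative_add,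
            derivative_one, derivative_sub, Polynomial.derivative_C_mul, derivative_X,
            derivative_C, eval_mul, eval_add, eval_sub, eval_pow, eval_C, eval_X, eval_one, derivative_zero, eval_zero]
          simp only [show i+2-1 = i+1 from rfl, show i+2-2 = i from rfl,
            show i+2+1 = i+3 from rfl, show i+2+2 = i+4 from rfl,
            show i+1+1 = i+2 from rfl, show i+3-1 = i+2 from rfl, show i+4-1 = i+3 from rfl,
            show i+1-1 = i from rfl,
            show i+2-(i+1) = 1 from by omega, show i+2-i = 2 from by omega,
            show i+2-(i+3) = 0 from by omega, show i+2-(i+4) = 0 from by omega,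
            show i+2-(i+2) = 0 from by omega,
            show i+3-(i+1) = 2 from by omega, show i+3-i = 3 from by omega,
            show i+3-(i+3) = 0 from by omega, show i+3-(i+4) = 0 from by omega,
            show i+3-(i+2) = 1 from by omega,
            show (1:ℕ)-1 = 0 from rfl, show (2:ℕ)-1 = 1 from rfl, show (3:ℕ)-1 = 2 from rfl,
            show (0:ℕ)-1 = 0 from rfl,
            pow_zero, pow_one, Nat.cast_zero, Nat.cast_one, Nat.cast_ofNat, Nat.cast_add]
          push_cast
          field_simp
          ring
    · obtain ⟨j, rfl⟩ : ∃ j, n = i + 2 + 2 + j := ⟨n - (i+2+2), by omega⟩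
      simp only [Hq, Gq, Pq, derivative_mul, derivative_pow, derivative_add,
        derivative_one, derivative_sub, Polynomial.derivative_C_mul, derivative_X,
        derivative_C, eval_mul, eval_add, eval_sub, eval_pow, eval_C, eval_X, eval_one, derivative_zero, eval_zero]
      simp only [show i+2-1 = i+1 from rfl, show i+2+1=i+3 from rfl, show i+2-2 = i from rfl,
        show i+2+2+j - (i+2) = j+2 by omega, show i+2+2+j-(i+1) = j+3 by omega,
        show i+2+2+j - i = j + 4 by omega, show i+2+2+j-(i+3) = j+1 by omega,
        show i+2+2+j-(i+2+2) = j by omega, show i+1+1 = i+2 from rfl, show i+3-1 = i+2 from rfl,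
        show j+2-1 = j+1 from rfl, show j+3-1=j+2 from rfl, show j+4-1=j+3 from rfl,
        show j+1-1 = j from rfl, show i+1-1 = i from rfl, show i+2+2 = i+4 from rfl]
      push_cast
      field_simp
      ring


theorem stmt14 (n : ℕ) (hn : 1 ≤ n) (t : ℝ) (ht : t ∈ Set.Ioo (0 : ℝ) 1)
    (φ : ℕ → ℕ → ℝ)
    (hφ : ∀ k ≤ n, ∀ w : ℝ,
      ∑ r ∈ range (n + 1), (1 - t) ^ r / (Nat.factorial r : ℝ) * φ r k * w ^ r
        = (1 + (1 - t) * w) ^ k * (1 - t * w) ^ (n - k))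
    (r : ℕ) (hr : r ≤ n) (k : ℕ) (hk : k ≤ n)
    (g : ℕ → ℝ)
    (hg : ∀ j, g j = (j : ℝ) / n * (φ r j - φ r (j - 1))
        + ((n : ℝ) - j) / n * (φ r (j + 1) - φ r j)) :
    (k : ℝ) / n * ((1 - t) / t) * g (k - 1) - ((n : ℝ) - 2 * k) / n * g k
        - ((n : ℝ) - k) / n * (t / (1 - t)) * g (k + 1)
      = (r : ℝ) * ((n : ℝ) - r + 1) / ((n : ℝ) ^ 2 * t * (1 - t)) * φ r k := by
  have ht0 : t ≠ 0 := ne_of_gt ht.1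
  have ht1 : (1:ℝ) - t ≠ 0 := sub_ne_zero.mpr (ne_of_gt ht.2)
  have hn0 : (n:ℝ) ≠ 0 := Nat.cast_ne_zero.mpr (by omega)
  set c : ℝ := (1-t)^r / (Nat.factorial r : ℝ) with hcdef
  have hc : c ≠ 0 := div_ne_zero (pow_ne_zero _ ht1)
    (Nat.cast_ne_zero.mpr r.factorial_ne_zero)
  have hcoef : ∀ j ≤ n, (Pq n t j).coeff r = c * φ r j := by
    intro j hj
    have h := extract (n+1) (fun i => (1-t)^i / (Nat.factorial i : ℝ) * φ i j) (Pq n t j)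
      (fun w => by simpa [Pq] using hφ j hj w) r (by omega)
    rw [← h]
  have hgq : ∀ j ≤ n, (Gq n t j).coeff r = c * g j := by
    intro j hj
    rw [hg j]
    rcases eq_or_lt_of_le hj with rfl | hjn
    · simp only [Gq, Polynomial.coeff_add, Polynomial.coeff_sub, Polynomial.coeff_C_mul,
        sub_self, zero_div, zero_mul]
      rw [hcoef j le_rfl, hcoef (j-1) (by omega)]
      ring
    · simp only [Gq, Polynomial.coeff_add, Polynomial.coeff_sub, Polynomial.coeff_C_mul]
      rw [hcoef j hj, hcoef (j-1) (by omega), hcoef (j+1) (by omega)]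
      ring
  set L : ℝ := (k : ℝ) / n * ((1 - t) / t) * g (k - 1) - ((n : ℝ) - 2 * k) / n * g k
      - ((n : ℝ) - k) / n * (t / (1 - t)) * g (k + 1) with hLdef
  have hH : (Hq n t k).coeff r = c * L := by
    rcases eq_or_lt_of_le hk with rfl | hkn
    · simp only [Hq, Polynomial.coeff_sub, Polynomial.coeff_C_mul, sub_self, zero_div,
        zero_mul, hLdef]
      rw [hgq (k-1) (by omega), hgq k le_rfl]
      ring
    · simp only [Hq, Polynomial.coeff_sub, Polynomial.coeff_C_mul, hLdef]
      rw [hgq (k-1) (by omega), hgq k hk, hgq (k+1) (by omega)]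
      ring
  have key : ((n:ℝ)^2*t*(1-t)) * (c * L) = (r:ℝ) * ((n:ℝ) - r + 1) * (c * φ r k) := by
    have h := congrArg (fun q : Polynomial ℝ => q.coeff r) (PI n hn t ht0 ht1 k hk)
    simp only [Polynomial.coeff_C_mul, hRcoeff] at h
    rw [← hH, ← hcoef k hk]
    exact h
  have hD : ((n:ℝ)^2*t*(1-t)) ≠ 0 :=
    mul_ne_zero (mul_ne_zero (pow_ne_zero _ hn0) ht0) ht1
  rw [div_mul_eq_mul_div, eq_div_iff hD]
  apply mul_left_cancel₀ hc
  linear_combination key
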